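/- arXiv:2007.10254 — 2 statements merged into one kernel-verified Lean document; each statement's English description precedes it below -/
import Mathlib

section
/- Let n ≥ 2 and let M be an n×d real matrix with d < n, all of whose entries have absolute value at most 1/n, and whose minimum singular value is at least α > 0. Let g = (1/n²)·z where z ∈ ℝⁿ is a random vector with independent standard Gaussian N(0,1) entries, and let [M, g] be the n×(d+1) matrix formed by appending g as a new column to M. Then with probability at least 1 − n^{−2}: every entry of [M, g] has absolute value at most 1/n, and the minimum singular value of [M, g] is at least n^{−10}·α. -/
open MeasureTheory ProbabilityTheory Matrix

/-- Euclidean norm of a vector. -/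
noncomputable def vnorm {ι : Type*} [Fintype ι] (v : ι → ℝ) : ℝ :=
  Real.sqrt (∑ i, v i ^ 2)

/-- Minimum singular value: the minimum of `‖Mx‖₂` over unit vectors `x`. -/
noncomputable def sigmaMin {ι κ' : Type*} [Fintype ι] [Fintype κ']
    (M : Matrix ι κ' ℝ) : ℝ :=
  ⨅ x : {x : κ' → ℝ // vnorm x = 1}, vnorm (M.mulVec x)

/-- `[M, g]`: the matrix `M` with the column `g` appended as its last column. -/
def appendCol {n d : ℕ} (M : Matrix (Fin n) (Fin d) ℝ) (g : Fin n → ℝ) :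
    Matrix (Fin n) (Fin (d + 1)) ℝ :=
  Matrix.of fun i j => Fin.lastCases (g i) (fun j' => M i j') j


open Real
open scoped NNReal ENNReal

lemma vnorm_eq_norm {ι : Type*} [Fintype ι] (v : ι → ℝ) :
    vnorm v = ‖(WithLp.equiv 2 (ι → ℝ)).symm v‖ := by
  rw [EuclideanSpace.norm_eq]
  simp only [Real.norm_eq_abs, sq_abs]
  rfl

lemma vnorm_nonneg {ι : Type*} [Fintype ι] (v : ι → ℝ) : 0 ≤ vnorm v :=
  Real.sqrt_nonneg _

lemma vnorm_add_le {ι : Type*} [Fintype ι] (v w : ι → ℝ) :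
    vnorm (v + w) ≤ vnorm v + vnorm w := by
  simp only [vnorm_eq_norm]
  exact norm_add_le ((WithLp.equiv 2 (ι → ℝ)).symm v) ((WithLp.equiv 2 (ι → ℝ)).symm w)

lemma vnorm_smul {ι : Type*} [Fintype ι] (c : ℝ) (v : ι → ℝ) :
    vnorm (c • v) = |c| * vnorm v := by
  simp only [vnorm, Pi.smul_apply, smul_eq_mul, mul_pow, ← Finset.mul_sum]
  rw [Real.sqrt_mul (sq_nonneg c), Real.sqrt_sq_eq_abs]

lemma abs_sum_mul_le_vnorm {ι : Type*} [Fintype ι] (v w : ι → ℝ) :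
    |∑ i, v i * w i| ≤ vnorm v * vnorm w := by
  calc |∑ i, v i * w i| = Real.sqrt ((∑ i, v i * w i) ^ 2) := (Real.sqrt_sq_eq_abs _).symm
    _ ≤ Real.sqrt ((∑ i, v i ^ 2) * ∑ i, w i ^ 2) := by
        apply Real.sqrt_le_sqrt
        exact Finset.sum_mul_sq_le_sq_mul_sq Finset.univ v w
    _ = vnorm v * vnorm w := Real.sqrt_mul (Finset.sum_nonneg fun i _ => sq_nonneg _) _

lemma vnorm_eq_one_iff {ι : Type*} [Fintype ι] {x : ι → ℝ} :
    vnorm x = 1 ↔ ∑ i, x i ^ 2 = 1 := by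
  constructor
  · intro h
    have := congrArg (· ^ 2) h
    simpa [vnorm, Real.sq_sqrt (Finset.sum_nonneg fun i _ => sq_nonneg (x i))] using this
  · intro h; simp [vnorm, h]

lemma vnorm_single_one {ι : Type*} [Fintype ι] [DecidableEq ι] (j : ι) :
    vnorm (Pi.single j (1:ℝ)) = 1 := by
  rw [vnorm_eq_one_iff]
  rw [Finset.sum_eq_single j]
  · simp
  · intro i _ hij; simp [Pi.single_apply, hij]
  · simp

lemma sigmaMin_le_vnorm {ι κ' : Type*} [Fintype ι] [Fintype κ']
    (M : Matrix ι κ' ℝ) (x : κ' → ℝ) (hx : vnorm x = 1) :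
    sigmaMin M ≤ vnorm (M.mulVec x) := by
  apply ciInf_le _ (⟨x, hx⟩ : {x : κ' → ℝ // vnorm x = 1})
  exact ⟨0, by rintro _ ⟨y, rfl⟩; exact vnorm_nonneg _⟩

lemma sigmaMin_smul_le {ι κ' : Type*} [Fintype ι] [Fintype κ']
    (M : Matrix ι κ' ℝ) (y : κ' → ℝ) (hy : 0 < vnorm y) :
    sigmaMin M * vnorm y ≤ vnorm (M.mulVec y) := by
  have h1 : vnorm ((vnorm y)⁻¹ • y) = 1 := by
    rw [vnorm_smul, abs_of_pos (inv_pos.mpr hy), inv_mul_cancel₀ hy.ne']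
  have h2 := sigmaMin_le_vnorm M _ h1
  rw [Matrix.mulVec_smul, vnorm_smul, abs_of_pos (inv_pos.mpr hy)] at h2
  calc sigmaMin M * vnorm y ≤ ((vnorm y)⁻¹ * vnorm (M.mulVec y)) * vnorm y :=
        mul_le_mul_of_nonneg_right h2 hy.le
    _ = vnorm (M.mulVec y) := by field_simp

lemma vnorm_le_sqrt {m : ℕ} (w : Fin m → ℝ) (c : ℝ) (h : ∀ i, |w i| ≤ c) :
    vnorm w ≤ Real.sqrt (m * c ^ 2) := by
  apply Real.sqrt_le_sqrt
  calc ∑ i, w i ^ 2 ≤ ∑ _i : Fin m, c ^ 2 := by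
        refine Finset.sum_le_sum fun i _ => ?_
        rw [← sq_abs]
        exact pow_le_pow_left₀ (abs_nonneg _) (h i) 2
    _ = m * c ^ 2 := by simp [Finset.sum_const, mul_comm]

lemma rpow_neg_nat_eq (a : ℝ) (ha : 0 ≤ a) (k : ℕ) : a ^ (-(k:ℝ)) = (a ^ k)⁻¹ := by
  rw [Real.rpow_neg ha, Real.rpow_natCast]

lemma core_det (n d : ℕ) (hn : 2 ≤ n)
    (M : Matrix (Fin n) (Fin d) ℝ) (hMent : ∀ i j, |M i j| ≤ 1 / n)
    (α : ℝ) (hα : 0 < α) (hMsv : α ≤ sigmaMin M)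
    (v g : Fin n → ℝ) (hv1 : ∑ i, v i ^ 2 = 1)
    (hvM : ∀ j, ∑ i, v i * M i j = 0)
    (hge : ∀ i, |g i| ≤ 1 / n)
    (hvg : (n : ℝ) ^ (-6 : ℝ) ≤ |∑ i, v i * g i|) :
    (∀ i j, |appendCol M g i j| ≤ 1 / n) ∧
      (n : ℝ) ^ (-10 : ℝ) * α ≤ sigmaMin (appendCol M g) := by
  have hn0 : (0:ℝ) < n := by positivity
  have hn2 : (2:ℝ) ≤ n := by exact_mod_cast hn
  -- entry bound
  have hent : ∀ i j, |appendCol M g i j| ≤ 1 / n := by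
    intro i j
    refine Fin.lastCases ?_ ?_ j
    · simpa [appendCol] using hge i
    · intro j'; simpa [appendCol] using hMent i j'
  refine ⟨hent, ?_⟩
  -- d must be positive
  rcases Nat.eq_zero_or_pos d with hd0 | hd0
  · exfalso
    subst hd0
    have : IsEmpty {x : Fin 0 → ℝ // vnorm x = 1} := by
      refine ⟨fun x => ?_⟩
      have : vnorm x.1 = 0 := by simp [vnorm]
      rw [x.2] at this; norm_num at this
    rw [sigmaMin, Real.iInf_of_isEmpty] at hMsv
    linarith
  -- α ≤ 1
  have hsqn : Real.sqrt ((n:ℝ) * (1/n)^2) ≤ 3/4 := by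
    have h1 : (n:ℝ) * (1/n)^2 = 1 / n := by field_simp
    rw [h1]
    have : (1:ℝ)/n ≤ 1/2 := by
      apply div_le_div_of_nonneg_left <;> linarith
    calc Real.sqrt (1/n) ≤ Real.sqrt (1/2) := Real.sqrt_le_sqrt this
      _ ≤ 3/4 := by
          rw [show (3:ℝ)/4 = Real.sqrt ((3/4)^2) by
            rw [Real.sqrt_sq]; norm_num]
          exact Real.sqrt_le_sqrt (by norm_num)
  have hα1 : α ≤ 3/4 := by
    have h0 := sigmaMin_le_vnorm M (Pi.single ⟨0, hd0⟩ 1) (vnorm_single_one _)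
    rw [show M.mulVec (Pi.single ⟨0, hd0⟩ 1) = fun i => M i ⟨0, hd0⟩ * 1 from by ext i; simp] at h0
    have h1 : vnorm (fun i => M i ⟨0, hd0⟩ * 1) ≤ Real.sqrt ((n:ℝ) * (1/n)^2) :=
      vnorm_le_sqrt _ _ (fun i => by simpa using hMent i ⟨0, hd0⟩)
    linarith
  -- nonempty sphere in dimension d+1
  haveI : Nonempty {x : Fin (d+1) → ℝ // vnorm x = 1} :=
    ⟨⟨Pi.single (Fin.last d) 1, vnorm_single_one _⟩⟩
  rw [sigmaMin]
  apply le_ciInf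
  rintro ⟨x, hx⟩
  set A := appendCol M g with hA
  set t := x (Fin.last d) with ht
  set y : Fin d → ℝ := fun j => x (Fin.castSucc j) with hy
  have hsum : ∑ j, y j ^ 2 + t ^ 2 = 1 := by
    have h := vnorm_eq_one_iff.mp hx
    rwa [Fin.sum_univ_castSucc] at h
  have hAx : A.mulVec x = M.mulVec y + t • g := by
    funext i
    simp only [Matrix.mulVec, dotProduct, Fin.sum_univ_castSucc, Pi.add_apply, Pi.smul_apply,
      smul_eq_mul]
    have h1 : ∀ j : Fin d, A i (Fin.castSucc j) = M i j := by
      intro j; simp [hA, appendCol]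
    have h2 : A i (Fin.last d) = g i := by simp [hA, appendCol]
    simp only [h1, h2]
    ring
  have hn10 : (n:ℝ) ^ (-10:ℝ) = ((n:ℝ)^(10:ℕ))⁻¹ := by
    rw [show (-10:ℝ) = -((10:ℕ):ℝ) by norm_num, rpow_neg_nat_eq _ hn0.le]
  have hn6 : (n:ℝ) ^ (-6:ℝ) = ((n:ℝ)^(6:ℕ))⁻¹ := by
    rw [show (-6:ℝ) = -((6:ℕ):ℝ) by norm_num, rpow_neg_nat_eq _ hn0.le]
  rcases le_or_gt (α/2) |t| with hcase | hcase
  · -- large t: use orthogonal vector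
    have hvnormv : vnorm v = 1 := vnorm_eq_one_iff.mpr hv1
    have hCS : |∑ i, v i * A.mulVec x i| ≤ vnorm (A.mulVec x) := by
      have := abs_sum_mul_le_vnorm v (A.mulVec x)
      rwa [hvnormv, one_mul] at this
    have hzero : ∑ i, v i * M.mulVec y i = 0 := by
      simp only [Matrix.mulVec, dotProduct, Finset.mul_sum]
      rw [Finset.sum_comm]
      have : ∀ j : Fin d, ∑ i, v i * (M i j * y j) = (∑ i, v i * M i j) * y j := by
        intro j
        rw [Finset.sum_mul]
        exact Finset.sum_congr rfl fun i _ => by ring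
      rw [Finset.sum_congr rfl fun j _ => this j]
      simp [hvM]
    have hinner : ∑ i, v i * A.mulVec x i = t * ∑ i, v i * g i := by
      rw [hAx]
      have : ∀ i, v i * (M.mulVec y + t • g) i
          = v i * M.mulVec y i + t * (v i * g i) := by
        intro i
        simp only [Pi.add_apply, Pi.smul_apply, smul_eq_mul]
        ring
      rw [Finset.sum_congr rfl fun i _ => this i, Finset.sum_add_distrib, hzero,
        zero_add, Finset.mul_sum]
    have hlow : α / 2 * (n:ℝ) ^ (-6:ℝ) ≤ vnorm (A.mulVec x) := by
      have h1 : α / 2 * (n:ℝ) ^ (-6:ℝ) ≤ |t| * |∑ i, v i * g i| := by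
        apply mul_le_mul hcase hvg (by rw [hn6]; positivity) (abs_nonneg t)
      calc α / 2 * (n:ℝ) ^ (-6:ℝ) ≤ |t| * |∑ i, v i * g i| := h1
        _ = |∑ i, v i * A.mulVec x i| := by rw [hinner, abs_mul]
        _ ≤ vnorm (A.mulVec x) := hCS
    refine le_trans ?_ hlow
    rw [hn10, hn6]
    have h4 : (2:ℝ) ≤ (n:ℝ)^(4:ℕ) :=
      le_trans hn2 (le_self_pow₀ (by linarith) (by norm_num))
    have h6pos : (0:ℝ) < (n:ℝ)^(6:ℕ) := by positivity
    have h10 : ((n:ℝ)^(10:ℕ))⁻¹ = ((n:ℝ)^(6:ℕ))⁻¹ * ((n:ℝ)^(4:ℕ))⁻¹ := by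
      rw [← mul_inv]; congr 1; ring
    have h4' : ((n:ℝ)^(4:ℕ))⁻¹ ≤ 1/2 := by
      rw [inv_le_comm₀ (by positivity) (by norm_num)]
      linarith
    calc ((n:ℝ)^(10:ℕ))⁻¹ * α = α * (((n:ℝ)^(6:ℕ))⁻¹ * ((n:ℝ)^(4:ℕ))⁻¹) := by
          rw [h10]; ring
      _ ≤ α * (((n:ℝ)^(6:ℕ))⁻¹ * (1/2)) := by
          apply mul_le_mul_of_nonneg_left _ hα.le
          exact mul_le_mul_of_nonneg_left h4' (by positivity)
      _ = α / 2 * ((n:ℝ)^(6:ℕ))⁻¹ := by ring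
  · -- small t
    have ht2 : t ^ 2 ≤ (α/2) ^ 2 := by
      rw [← sq_abs]
      apply pow_le_pow_left₀ (abs_nonneg t) hcase.le
    have hy2 : (3:ℝ)/4 ≤ ∑ j, y j ^ 2 := by nlinarith
    have hvy : (4:ℝ)/5 ≤ vnorm y := by
      rw [show (4:ℝ)/5 = Real.sqrt ((4/5)^2) by rw [Real.sqrt_sq]; norm_num]
      apply Real.sqrt_le_sqrt
      nlinarith
    have hypos : 0 < vnorm y := lt_of_lt_of_le (by norm_num) hvy
    have hMy : α * vnorm y ≤ vnorm (M.mulVec y) := by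
      have h2 := sigmaMin_smul_le M y hypos
      nlinarith [mul_le_mul_of_nonneg_right hMsv hypos.le]
    have hgn : vnorm g ≤ 3/4 := le_trans (vnorm_le_sqrt g (1/n) hge) hsqn
    have htri : vnorm (M.mulVec y) ≤ vnorm (A.mulVec x) + |t| * vnorm g := by
      have hrw : M.mulVec y = A.mulVec x + (-t) • g := by
        rw [hAx]; funext i
        simp only [Pi.add_apply, Pi.smul_apply, smul_eq_mul]
        ring
      calc vnorm (M.mulVec y) ≤ vnorm (A.mulVec x) + vnorm ((-t) • g) := by
            rw [hrw]; exact vnorm_add_le _ _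
        _ = vnorm (A.mulVec x) + |t| * vnorm g := by rw [vnorm_smul, abs_neg]
    have hprod : |t| * vnorm g ≤ (α/2) * (3/4) :=
      mul_le_mul hcase.le hgn (vnorm_nonneg g) (by linarith)
    have h1024 : (1024:ℝ) ≤ (n:ℝ)^(10:ℕ) := by
      calc (1024:ℝ) = 2^(10:ℕ) := by norm_num
        _ ≤ (n:ℝ)^(10:ℕ) := pow_le_pow_left₀ (by norm_num) hn2 10
    have hsmall : (n:ℝ) ^ (-10:ℝ) ≤ 17/40 := by
      rw [hn10, inv_le_comm₀ (by positivity) (by norm_num)]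
      linarith
    have hpos10 : (0:ℝ) ≤ (n:ℝ) ^ (-10:ℝ) := by rw [hn10]; positivity
    have e1 : (n:ℝ) ^ (-10:ℝ) * α ≤ 17/40 * α := mul_le_mul_of_nonneg_right hsmall hα.le
    have e2 : α * (4/5) ≤ α * vnorm y := mul_le_mul_of_nonneg_left hvy hα.le
    linarith

lemma exists_orthovec (n d : ℕ) (hd : d < n) (M : Matrix (Fin n) (Fin d) ℝ) :
    ∃ v : Fin n → ℝ, (∑ i, v i ^ 2 = 1) ∧ ∀ j, ∑ i, v i * M i j = 0 := by
  have hker : LinearMap.ker (Matrix.mulVecLin Mᵀ) ≠ ⊥ := by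
    intro hbot
    have hinj : Function.Injective (Matrix.mulVecLin Mᵀ) :=
      LinearMap.ker_eq_bot.mp hbot
    have := LinearMap.finrank_le_finrank_of_injective hinj
    simp only [Module.finrank_pi, Fintype.card_fin] at this
    omega
  obtain ⟨w, hw_mem, hw_ne⟩ := Submodule.exists_mem_ne_zero_of_ne_bot hker
  have hw0 : Mᵀ.mulVec w = 0 := hw_mem
  have hsum_pos : 0 < ∑ i, w i ^ 2 := by
    rcases Function.ne_iff.mp hw_ne with ⟨i, hi⟩
    have : 0 < w i ^ 2 := lt_of_le_of_ne (sq_nonneg _) (Ne.symm (pow_ne_zero 2 hi))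
    exact Finset.sum_pos' (fun j _ => sq_nonneg _) ⟨i, Finset.mem_univ i, this⟩
  have hvn : 0 < vnorm w := Real.sqrt_pos.mpr hsum_pos
  refine ⟨(vnorm w)⁻¹ • w, ?_, ?_⟩
  · have := vnorm_smul (vnorm w)⁻¹ w
    rw [abs_of_pos (inv_pos.mpr hvn), inv_mul_cancel₀ hvn.ne'] at this
    exact vnorm_eq_one_iff.mp this
  · intro j
    have hj : ∑ i, w i * M i j = 0 := by
      have := congrFun hw0 j
      simpa [Matrix.mulVec, dotProduct, Matrix.transpose_apply, mul_comm] using this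
    simp only [Pi.smul_apply, smul_eq_mul]
    calc ∑ i, (vnorm w)⁻¹ * w i * M i j
        = (vnorm w)⁻¹ * ∑ i, w i * M i j := by
          rw [Finset.mul_sum]
          exact Finset.sum_congr rfl fun i _ => by ring
      _ = 0 := by rw [hj, mul_zero]

open Real in
lemma integral_exp_neg_mul_Ioi {b : ℝ} (hb : 0 < b) (a : ℝ) :
    ∫ x in Set.Ioi a, Real.exp (-(b * x)) = Real.exp (-(b * a)) / b := by
  have hderiv : ∀ x ∈ Set.Ici a,
      HasDerivAt (fun x => -Real.exp (-(b * x)) / b) (Real.exp (-(b * x))) x := by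
    intro x _
    have h1 : HasDerivAt (fun x : ℝ => -(b * x)) (-b) x := by
      simpa using ((hasDerivAt_id x).const_mul b).fun_neg
    have h2 := (h1.exp).fun_neg.div_const b
    refine h2.congr_deriv ?_
    rw [mul_neg, neg_neg, mul_div_assoc, div_self hb.ne', mul_one]
  have hint : MeasureTheory.IntegrableOn (fun x => Real.exp (-(b * x))) (Set.Ioi a) := by
    simpa [neg_mul] using exp_neg_integrableOn_Ioi a hb
  have htend : Filter.Tendsto (fun x => -Real.exp (-(b * x)) / b) Filter.atTop (nhds 0) := by
    have h1 : Filter.Tendsto (fun x : ℝ => -(b * x)) Filter.atTop Filter.atBot := by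
      apply Filter.tendsto_neg_atBot_iff.mpr
      exact (Filter.tendsto_id (α := ℝ)).const_mul_atTop hb
    have h2 : Filter.Tendsto (fun x => Real.exp (-(b * x))) Filter.atTop (nhds 0) :=
      Real.tendsto_exp_atBot.comp h1
    have := (h2.neg).div_const b
    simpa using this
  have := MeasureTheory.integral_Ioi_of_hasDerivAt_of_tendsto' hderiv hint htend
  rw [this]
  ring


open Real in
lemma gaussian_tail_Ioi {t : ℝ} (ht : 0 < t) :
    gaussianReal 0 1 {x | t < x} ≤
      ENNReal.ofReal (Real.exp (-t^2/2) / (t * Real.sqrt (2*π))) := by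
  rw [show {x : ℝ | t < x} = Set.Ioi t from rfl, gaussianReal_apply 0 one_ne_zero]
  have hCpos : 0 < (Real.sqrt (2*π))⁻¹ * Real.exp (t^2/2) := by positivity
  have hpdf : ∀ x ∈ Set.Ioi t, gaussianPDF 0 1 x ≤
      ENNReal.ofReal (((Real.sqrt (2*π))⁻¹ * Real.exp (t^2/2)) * Real.exp (-(t * x))) := by
    intro x _
    rw [gaussianPDF]
    apply ENNReal.ofReal_le_ofReal
    rw [gaussianPDFReal]
    push_cast
    rw [show (2:ℝ) * π * 1 = 2*π by ring, mul_assoc, ← Real.exp_add]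
    apply mul_le_mul_of_nonneg_left _ (by positivity)
    apply Real.exp_le_exp.mpr
    nlinarith [sq_nonneg (x - t)]
  have hint : MeasureTheory.IntegrableOn (fun x => Real.exp (-(t*x))) (Set.Ioi t) := by
    simpa [neg_mul] using exp_neg_integrableOn_Ioi t ht
  have step1 := MeasureTheory.setLIntegral_mono (μ := volume) (s := Set.Ioi t)
    (f := fun x => gaussianPDF 0 1 x)
    (g := fun x => ENNReal.ofReal (((Real.sqrt (2*π))⁻¹ * Real.exp (t^2/2)) * Real.exp (-(t * x))))
    (by fun_prop) hpdf
  refine le_trans step1 ?_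
  rw [← MeasureTheory.ofReal_integral_eq_lintegral_ofReal (hint.const_mul _)
    (MeasureTheory.ae_of_all _ fun x => by positivity)]
  rw [MeasureTheory.integral_const_mul, integral_exp_neg_mul_Ioi ht]
  apply le_of_eq
  congr 1
  have hexp : Real.exp (t^2/2) * Real.exp (-(t*t)) = Real.exp (-t^2/2) := by
    rw [← Real.exp_add]; congr 1; ring
  calc (Real.sqrt (2*π))⁻¹ * Real.exp (t^2/2) * (Real.exp (-(t*t)) / t)
      = (Real.exp (t^2/2) * Real.exp (-(t*t))) / (t * Real.sqrt (2*π)) := by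
        field_simp
    _ = Real.exp (-t^2/2) / (t * Real.sqrt (2*π)) := by rw [hexp]

lemma gaussian_tail_abs {t : ℝ} (ht : 0 < t) :
    gaussianReal 0 1 {x | t < |x|} ≤
      ENNReal.ofReal (2 * (Real.exp (-t^2/2) / (t * Real.sqrt (2*π)))) := by
  have hsub : {x : ℝ | t < |x|} ⊆ {x | t < x} ∪ {x | x < -t} := by
    intro x hx
    simp only [Set.mem_setOf_eq] at hx
    rcases abs_cases x with ⟨h1, _⟩ | ⟨h1, _⟩
    · left; simp only [Set.mem_setOf_eq]; linarith
    · right; simp only [Set.mem_setOf_eq]; linarith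
  have hneg : gaussianReal 0 1 {x | x < -t} = gaussianReal 0 1 {x | t < x} := by
    have hmap := gaussianReal_map_const_mul (μ := (0:ℝ)) (v := (1:ℝ≥0)) (-1)
    have h1 : (NNReal.mk ((-1:ℝ)^2) (sq_nonneg _) * 1 : ℝ≥0) = 1 := Subtype.ext (by norm_num)
    rw [h1, mul_zero] at hmap
    have h2 : {x : ℝ | x < -t} = ((-1 : ℝ) * ·) ⁻¹' {x | t < x} := by
      ext x; simp only [Set.mem_setOf_eq, Set.mem_preimage]
      constructor <;> intro h <;> linarith
    rw [h2, ← Measure.map_apply (by fun_prop)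
      (by exact measurableSet_Ioi : MeasurableSet {x : ℝ | t < x}), hmap]
  calc gaussianReal 0 1 {x | t < |x|}
      ≤ gaussianReal 0 1 ({x | t < x} ∪ {x | x < -t}) := measure_mono hsub
    _ ≤ gaussianReal 0 1 {x | t < x} + gaussianReal 0 1 {x | x < -t} := measure_union_le _ _
    _ ≤ ENNReal.ofReal (Real.exp (-t^2/2) / (t * Real.sqrt (2*π)))
        + ENNReal.ofReal (Real.exp (-t^2/2) / (t * Real.sqrt (2*π))) := by
        rw [hneg]
        exact add_le_add (gaussian_tail_Ioi ht) (gaussian_tail_Ioi ht)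
    _ = ENNReal.ofReal (2 * (Real.exp (-t^2/2) / (t * Real.sqrt (2*π)))) := by
        rw [← ENNReal.ofReal_add (by positivity) (by positivity)]
        congr 1; ring

lemma gaussianReal_Ioo_le {w : ℝ≥0} (hw : w ≠ 0) (a b : ℝ) :
    gaussianReal 0 w (Set.Ioo a b) ≤
      ENNReal.ofReal ((Real.sqrt (2*π*w))⁻¹ * (b - a)) := by
  rw [gaussianReal_apply 0 hw]
  calc ∫⁻ x in Set.Ioo a b, gaussianPDF 0 w x
      ≤ ∫⁻ _x in Set.Ioo a b, ENNReal.ofReal ((Real.sqrt (2*π*w))⁻¹) := by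
        apply MeasureTheory.setLIntegral_mono measurable_const
        intro x _
        rw [gaussianPDF]
        apply ENNReal.ofReal_le_ofReal
        rw [gaussianPDFReal]
        calc (Real.sqrt (2*π*w))⁻¹ * Real.exp (-(x - 0)^2/(2*w))
            ≤ (Real.sqrt (2*π*w))⁻¹ * 1 := by
              apply mul_le_mul_of_nonneg_left _ (by positivity)
              apply Real.exp_le_one_iff.mpr
              have hwpos : (0:ℝ) < w := by
                exact_mod_cast pos_iff_ne_zero.mpr hw
              apply div_nonpos_of_nonpos_of_nonneg
              · simp [sq_nonneg]
              · positivity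
          _ = (Real.sqrt (2*π*w))⁻¹ := mul_one _
    _ = ENNReal.ofReal ((Real.sqrt (2*π*w))⁻¹) * volume (Set.Ioo a b) := by
        rw [MeasureTheory.setLIntegral_const]
    _ ≤ ENNReal.ofReal ((Real.sqrt (2*π*w))⁻¹ * (b - a)) := by
        rw [Real.volume_Ioo, ← ENNReal.ofReal_mul (by positivity)]

lemma indep_add_anticonc {Ω : Type*} [MeasurableSpace Ω] (μ : Measure Ω)
    [IsProbabilityMeasure μ]
    (X Y : Ω → ℝ) (hX : Measurable X) (hY : Measurable Y) (hind : IndepFun X Y μ)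
    (w : ℝ≥0) (hw : w ≠ 0) (hlaw : Measure.map X μ = gaussianReal 0 w) (δ : ℝ) :
    μ {ω | |X ω + Y ω| < δ} ≤ ENNReal.ofReal ((Real.sqrt (2*π*w))⁻¹ * (2*δ)) := by
  have hset : MeasurableSet {p : ℝ × ℝ | |p.1 + p.2| < δ} :=
    measurableSet_lt (by fun_prop) measurable_const
  have hprod := (ProbabilityTheory.indepFun_iff_map_prod_eq_prod_map_map
    hX.aemeasurable hY.aemeasurable).mp hind
  have heq : {ω | |X ω + Y ω| < δ} = (fun ω => (X ω, Y ω)) ⁻¹' {p | |p.1 + p.2| < δ} := rfl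
  rw [heq, ← Measure.map_apply (hX.prodMk hY) hset, hprod,
    Measure.prod_apply_symm hset]
  haveI : IsProbabilityMeasure (μ.map Y) := Measure.isProbabilityMeasure_map hY.aemeasurable
  calc ∫⁻ y, (μ.map X) ((fun x => (x, y)) ⁻¹' {p | |p.1 + p.2| < δ}) ∂(μ.map Y)
      ≤ ∫⁻ _y, ENNReal.ofReal ((Real.sqrt (2*π*w))⁻¹ * (2*δ)) ∂(μ.map Y) := by
        apply MeasureTheory.lintegral_mono
        intro y
        have hsub : ((fun x => (x, y)) ⁻¹' {p : ℝ×ℝ | |p.1 + p.2| < δ})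
            ⊆ Set.Ioo (-δ - y) (δ - y) := by
          intro x hx
          simp only [Set.mem_preimage, Set.mem_setOf_eq] at hx
          rcases abs_lt.mp hx with ⟨h1, h2⟩
          exact ⟨by linarith, by linarith⟩
        calc (μ.map X) ((fun x => (x, y)) ⁻¹' {p | |p.1 + p.2| < δ})
            ≤ (μ.map X) (Set.Ioo (-δ - y) (δ - y)) := measure_mono hsub
          _ ≤ ENNReal.ofReal ((Real.sqrt (2*π*w))⁻¹ * ((δ - y) - (-δ - y))) := by
              rw [hlaw]; exact gaussianReal_Ioo_le hw _ _
          _ = ENNReal.ofReal ((Real.sqrt (2*π*w))⁻¹ * (2*δ)) := by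
              congr 1; ring
    _ = ENNReal.ofReal ((Real.sqrt (2*π*w))⁻¹ * (2*δ)) := by
        rw [MeasureTheory.lintegral_const, measure_univ, mul_one]

lemma sum_anticonc {Ω : Type*} [MeasurableSpace Ω] (μ : Measure Ω)
    [IsProbabilityMeasure μ] (n : ℕ) (hn : 1 ≤ n)
    (z : Ω → Fin n → ℝ)
    (hzmeas : ∀ i, Measurable fun ω => z ω i)
    (hzindep : iIndepFun (fun (i : Fin n) (ω : Ω) => z ω i) μ)
    (hzlaw : ∀ i, Measure.map (fun ω => z ω i) μ = gaussianReal 0 1)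
    (v : Fin n → ℝ) (hv1 : ∑ i, v i ^ 2 = 1) (δ : ℝ) (hδ : 0 ≤ δ) :
    μ {ω | |∑ i, v i * z ω i| < δ} ≤ ENNReal.ofReal (Real.sqrt n * δ) := by
  haveI : NeZero n := ⟨by omega⟩
  obtain ⟨i₀, -, hmax⟩ := Finset.exists_max_image Finset.univ (fun j => |v j|)
    ⟨0, Finset.mem_univ 0⟩
  have hvi : (1:ℝ) ≤ n * v i₀ ^ 2 := by
    calc (1:ℝ) = ∑ i, v i ^ 2 := hv1.symm
      _ ≤ ∑ _i : Fin n, v i₀ ^ 2 := by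
          refine Finset.sum_le_sum fun i _ => ?_
          rw [← sq_abs (v i), ← sq_abs (v i₀)]
          exact pow_le_pow_left₀ (abs_nonneg _) (hmax i (Finset.mem_univ i)) 2
      _ = n * v i₀ ^ 2 := by simp [Finset.sum_const, mul_comm]
  have hnR : (0:ℝ) < n := by exact_mod_cast hn
  have hvi0 : v i₀ ≠ 0 := by
    intro h; rw [h] at hvi; norm_num at hvi
  set W : Fin n → Ω → ℝ := fun j ω => v j * z ω j with hW
  have hWmeas : ∀ j, Measurable (W j) := fun j => (hzmeas j).const_mul (v j)
  have hWind : iIndepFun W μ :=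
    hzindep.comp (fun j x => v j * x) (fun j => measurable_const_mul (v j))
  set X : Ω → ℝ := W i₀ with hX
  set Y : Ω → ℝ := fun ω => ∑ j ∈ Finset.univ.erase i₀, W j ω with hY
  have hXY : ∀ ω, ∑ i, v i * z ω i = X ω + Y ω := by
    intro ω
    rw [hX, hY]
    exact (Finset.add_sum_erase Finset.univ (fun j => W j ω) (Finset.mem_univ i₀)).symm
  have hind : IndepFun X Y μ := by
    have h := hWind.indepFun_finset_sum_of_notMem hWmeas
      (s := Finset.univ.erase i₀) (i := i₀) (Finset.notMem_erase i₀ Finset.univ)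
    have h2 : IndepFun X (∑ j ∈ Finset.univ.erase i₀, W j) μ := h.symm
    have h3 : (∑ j ∈ Finset.univ.erase i₀, W j) = Y := by
      funext ω; rw [hY]; exact Finset.sum_apply ω _ _
    rwa [h3] at h2
  set w : ℝ≥0 := ⟨v i₀ ^ 2, sq_nonneg _⟩ with hw
  have hwne : w ≠ 0 := by
    intro h
    apply hvi0
    have := congrArg (fun x : ℝ≥0 => (x:ℝ)) h
    simp only [hw, NNReal.coe_mk, NNReal.coe_zero] at this
    exact pow_eq_zero_iff (n := 2) (by norm_num) |>.mp this
  have hlawX : Measure.map X μ = gaussianReal 0 w := by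
    have h1 : X = (fun x => v i₀ * x) ∘ (fun ω => z ω i₀) := rfl
    rw [hX, hW]
    have h2 := Measure.map_map (μ := μ) (measurable_const_mul (v i₀)) (hzmeas i₀)
    calc Measure.map (fun ω => v i₀ * z ω i₀) μ
        = Measure.map (fun x => v i₀ * x) (Measure.map (fun ω => z ω i₀) μ) := h2.symm
      _ = Measure.map (fun x => v i₀ * x) (gaussianReal 0 1) := by rw [hzlaw i₀]
      _ = gaussianReal (v i₀ * 0) (NNReal.mk (v i₀ ^ 2) (sq_nonneg _) * 1) :=
          gaussianReal_map_const_mul (v i₀)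
      _ = gaussianReal 0 w := by rw [mul_zero, mul_one]; rfl
  have hYmeas : Measurable Y := by
    rw [hY]
    exact Finset.measurable_sum _ (fun j _ => hWmeas j)
  have hmain := indep_add_anticonc μ X Y (hWmeas i₀) hYmeas hind w hwne hlawX δ
  have hsetEq : {ω | |∑ i, v i * z ω i| < δ} = {ω | |X ω + Y ω| < δ} := by
    ext ω; simp only [Set.mem_setOf_eq, hXY ω]
  rw [hsetEq]
  refine le_trans hmain (ENNReal.ofReal_le_ofReal ?_)
  -- (√(2π w))⁻¹ * (2δ) ≤ √n * δ
  have hwR : ((w : ℝ)) = v i₀ ^ 2 := rfl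
  have hw1n : (1:ℝ)/n ≤ (w:ℝ) := by
    rw [hwR, div_le_iff₀ hnR, mul_comm]
    linarith
  have hsqrtn : (0:ℝ) < Real.sqrt n := Real.sqrt_pos.mpr hnR
  have hπ : (4:ℝ) ≤ 2 * π := by nlinarith [Real.pi_gt_three]
  have hkey : (Real.sqrt (2*π*w))⁻¹ ≤ Real.sqrt n / 2 := by
    rw [inv_le_comm₀ (by positivity) (by positivity)]
    have h1 : (2:ℝ) / Real.sqrt n ≤ Real.sqrt (2*π*w) := by
      rw [Real.le_sqrt (by positivity) (by positivity)]
      have h2 : ((2:ℝ) / Real.sqrt n)^2 = 4 / n := by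
        rw [div_pow, Real.sq_sqrt hnR.le]; norm_num
      rw [h2]
      calc (4:ℝ)/n = 4 * (1/n) := by ring
        _ ≤ 4 * (w:ℝ) := by
            apply mul_le_mul_of_nonneg_left hw1n (by norm_num)
        _ ≤ 2*π*(w:ℝ) := by
            apply mul_le_mul_of_nonneg_right hπ w.2
    have h0 : (Real.sqrt n / 2)⁻¹ = 2 / Real.sqrt n := by
      field_simp
    rw [h0]
    exact h1
  calc (Real.sqrt (2*π*w))⁻¹ * (2*δ) ≤ (Real.sqrt n / 2) * (2*δ) := by
        apply mul_le_mul_of_nonneg_right hkey (by positivity)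
    _ = Real.sqrt n * δ := by ring

lemma numeric_bound (n : ℕ) (hn : 2 ≤ n) :
    (n:ℝ) * (2 * (Real.exp (-(n:ℝ)^2/2) / ((n:ℝ) * Real.sqrt (2*π))))
      + Real.sqrt n * ((n:ℝ)^(4:ℕ))⁻¹ ≤ ((n:ℝ)^(2:ℕ))⁻¹ := by
  set a : ℝ := (n:ℝ) with ha
  have ha2 : (2:ℝ) ≤ a := by rw [ha]; exact_mod_cast hn
  have ha0 : (0:ℝ) < a := by linarith
  have hsqrt2pi : (5:ℝ)/2 ≤ Real.sqrt (2*π) := by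
    rw [Real.le_sqrt (by norm_num) (by positivity)]
    nlinarith [Real.pi_gt_d6]
  have hsπ : (0:ℝ) < Real.sqrt (2*π) := by positivity
  -- first term equals 2 E / sqrt(2π)
  have hterm1 : a * (2 * (Real.exp (-a^2/2) / (a * Real.sqrt (2*π))))
      = 2 * Real.exp (-a^2/2) / Real.sqrt (2*π) := by
    field_simp
  -- series bound
  have hseries := Real.sum_le_exp_of_nonneg (x := a) ha0.le 5
  rw [Finset.sum_range_succ, Finset.sum_range_succ, Finset.sum_range_succ,
    Finset.sum_range_succ, Finset.sum_range_succ] at hseries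
  norm_num [Nat.factorial] at hseries
  have hexpa : (8:ℝ)/5 * a^2 ≤ Real.exp a := by
    nlinarith [hseries, sq_nonneg (a-2), mul_nonneg (sub_nonneg.mpr ha2) (sq_nonneg (a-2)),
      sq_nonneg ((a-2)^2)]
  have hmono : Real.exp a ≤ Real.exp (a^2/2) := Real.exp_le_exp.mpr (by nlinarith)
  have hE : Real.exp (-a^2/2) ≤ 5/8 * (a^2)⁻¹ := by
    rw [neg_div, Real.exp_neg]
    have h1 : (8:ℝ)/5 * a^2 ≤ Real.exp (a^2/2) := le_trans hexpa hmono
    have h2 : (Real.exp (a^2/2))⁻¹ ≤ ((8:ℝ)/5 * a^2)⁻¹ := by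
      apply inv_anti₀ (by positivity) h1
    calc (Real.exp (a^2/2))⁻¹ ≤ ((8:ℝ)/5 * a^2)⁻¹ := h2
      _ = 5/8 * (a^2)⁻¹ := by rw [mul_inv]; norm_num
  have hterm1le : 2 * Real.exp (-a^2/2) / Real.sqrt (2*π) ≤ (1/2) * (a^2)⁻¹ := by
    have h1 : 2 * Real.exp (-a^2/2) / Real.sqrt (2*π)
        ≤ 2 * Real.exp (-a^2/2) / (5/2) := by
      apply div_le_div_of_nonneg_left (by positivity) (by norm_num) hsqrt2pi
    calc 2 * Real.exp (-a^2/2) / Real.sqrt (2*π) ≤ 2 * Real.exp (-a^2/2) / (5/2) := h1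
      _ = (4/5) * Real.exp (-a^2/2) := by ring
      _ ≤ (4/5) * (5/8 * (a^2)⁻¹) := by
          apply mul_le_mul_of_nonneg_left hE (by norm_num)
      _ = (1/2) * (a^2)⁻¹ := by ring
  have hsqa : Real.sqrt a ≤ a := by
    have h := Real.sqrt_le_sqrt (show a ≤ a^2 by nlinarith)
    rwa [Real.sqrt_sq ha0.le] at h
  have hterm2le : Real.sqrt a * (a^(4:ℕ))⁻¹ ≤ (1/2) * (a^2)⁻¹ := by
    have h1 : Real.sqrt a * (a^(4:ℕ))⁻¹ ≤ a * (a^(4:ℕ))⁻¹ :=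
      mul_le_mul_of_nonneg_right hsqa (by positivity)
    have h2 : a * (a^(4:ℕ))⁻¹ = (a^(3:ℕ))⁻¹ := by
      field_simp
    have h3 : (a^(3:ℕ))⁻¹ ≤ (1/2) * (a^2)⁻¹ := by
      rw [show (1:ℝ)/2 * (a^2)⁻¹ = (2 * a^2)⁻¹ by rw [mul_inv]; ring]
      apply inv_anti₀ (by positivity)
      nlinarith
    linarith
  rw [hterm1]
  push_cast
  linarith

/-- **Padding with a random Gaussian column keeps the matrix well-conditioned.**
If `M` is `n×d` with `d < n`, entries of magnitude at most `1/n` and minimum singular value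
at least `α > 0`, and `g = (1/n²)·z` with `z` a standard Gaussian vector, then with
probability at least `1 − n⁻²` every entry of `[M, g]` has magnitude at most `1/n` and the
minimum singular value of `[M, g]` is at least `n⁻¹⁰·α`. -/
theorem append_gaussian_column_min_singular_value
    {Ω : Type*} [MeasurableSpace Ω] (μ : Measure Ω) [IsProbabilityMeasure μ]
    (n d : ℕ) (hn : 2 ≤ n) (hd : d < n)
    (M : Matrix (Fin n) (Fin d) ℝ) (hMent : ∀ i j, |M i j| ≤ 1 / n)
    (α : ℝ) (hα : 0 < α) (hMsv : α ≤ sigmaMin M)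
    (z : Ω → Fin n → ℝ)
    (hzmeas : ∀ i, Measurable fun ω => z ω i)
    (hzindep : iIndepFun (fun (i : Fin n) (ω : Ω) => z ω i) μ)
    (hzlaw : ∀ i, Measure.map (fun ω => z ω i) μ = gaussianReal 0 1) :
    ENNReal.ofReal (1 - (n : ℝ) ^ (-2 : ℝ)) ≤
      μ {ω | (∀ i j, |appendCol M (fun i => (1 / (n : ℝ) ^ 2) * z ω i) i j| ≤ 1 / n) ∧
             (n : ℝ) ^ (-10 : ℝ) * α ≤
               sigmaMin (appendCol M (fun i => (1 / (n : ℝ) ^ 2) * z ω i))} := by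
  have hn0 : (0:ℝ) < n := by
    have : (2:ℝ) ≤ n := by exact_mod_cast hn
    linarith
  obtain ⟨v, hv1, hvM⟩ := exists_orthovec n d hd M
  set δ : ℝ := ((n:ℝ)^(4:ℕ))⁻¹ with hδ
  have hδ0 : 0 < δ := by rw [hδ]; positivity
  set E : Set Ω := {ω | (∀ i, |z ω i| ≤ n) ∧ δ ≤ |∑ i, v i * z ω i|} with hE
  have hsub : E ⊆ {ω | (∀ i j, |appendCol M (fun i => (1 / (n : ℝ) ^ 2) * z ω i) i j| ≤ 1 / n) ∧
             (n : ℝ) ^ (-10 : ℝ) * α ≤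
               sigmaMin (appendCol M (fun i => (1 / (n : ℝ) ^ 2) * z ω i))} := by
    rintro ω ⟨h1, h2⟩
    have hge : ∀ i, |(1 / (n : ℝ) ^ 2) * z ω i| ≤ 1 / (n:ℝ) := by
      intro i
      rw [abs_mul, abs_of_pos (show (0:ℝ) < 1/(n:ℝ)^2 by positivity)]
      calc 1/(n:ℝ)^2 * |z ω i| ≤ 1/(n:ℝ)^2 * n :=
            mul_le_mul_of_nonneg_left (h1 i) (by positivity)
        _ = 1/(n:ℝ) := by field_simp
    have hvg : (n : ℝ) ^ (-6 : ℝ) ≤ |∑ i, v i * ((1 / (n : ℝ) ^ 2) * z ω i)| := by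
      have hre : ∑ i, v i * ((1 / (n : ℝ) ^ 2) * z ω i)
          = (1 / (n : ℝ) ^ 2) * ∑ i, v i * z ω i := by
        rw [Finset.mul_sum]
        exact Finset.sum_congr rfl fun i _ => by ring
      rw [hre, abs_mul, abs_of_pos (show (0:ℝ) < 1/(n:ℝ)^2 by positivity)]
      have h6 : (n:ℝ) ^ (-6:ℝ) = 1/(n:ℝ)^2 * δ := by
        rw [show (-6:ℝ) = -((6:ℕ):ℝ) by norm_num, rpow_neg_nat_eq _ hn0.le, hδ]
        rw [one_div, ← mul_inv]
        congr 1
        ring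
      rw [h6]
      exact mul_le_mul_of_nonneg_left h2 (by positivity)
    exact core_det n d hn M hMent α hα hMsv v _ hv1 hvM hge hvg
  refine le_trans ?_ (measure_mono hsub)
  -- complement bound
  have hcomp : Eᶜ ⊆ (⋃ i, {ω | (n:ℝ) < |z ω i|}) ∪ {ω | |∑ i, v i * z ω i| < δ} := by
    intro ω hω
    simp only [hE, Set.mem_compl_iff, Set.mem_setOf_eq, not_and_or, not_forall, not_le] at hω
    rcases hω with h | h
    · left
      obtain ⟨i, hi⟩ := h
      exact Set.mem_iUnion.mpr ⟨i, hi⟩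
    · right
      exact h
  set q : ℝ := 2 * (Real.exp (-(n:ℝ)^2/2) / ((n:ℝ) * Real.sqrt (2*π))) with hq
  have hq0 : 0 ≤ q := by rw [hq]; positivity
  have htail : ∀ i, μ {ω | (n:ℝ) < |z ω i|} ≤ ENNReal.ofReal q := by
    intro i
    have hms : MeasurableSet {x : ℝ | (n:ℝ) < |x|} :=
      measurableSet_lt measurable_const (continuous_abs.measurable)
    have heq : {ω | (n:ℝ) < |z ω i|} = (fun ω => z ω i) ⁻¹' {x | (n:ℝ) < |x|} := rfl
    rw [heq, ← Measure.map_apply (hzmeas i) hms, hzlaw i]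
    exact gaussian_tail_abs hn0
  have hanti := sum_anticonc μ n (by omega) z hzmeas hzindep hzlaw v hv1 δ hδ0.le
  have hEc : μ Eᶜ ≤ ENNReal.ofReal (((n:ℝ)^(2:ℕ))⁻¹) := by
    calc μ Eᶜ ≤ μ ((⋃ i, {ω | (n:ℝ) < |z ω i|}) ∪ {ω | |∑ i, v i * z ω i| < δ}) :=
          measure_mono hcomp
      _ ≤ μ (⋃ i, {ω | (n:ℝ) < |z ω i|}) + μ {ω | |∑ i, v i * z ω i| < δ} :=
          measure_union_le _ _
      _ ≤ (∑' i : Fin n, μ {ω | (n:ℝ) < |z ω i|}) + ENNReal.ofReal (Real.sqrt n * δ) :=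
          add_le_add (measure_iUnion_le _) hanti
      _ ≤ (∑' _i : Fin n, ENNReal.ofReal q) + ENNReal.ofReal (Real.sqrt n * δ) := by
          apply add_le_add_left
          rw [tsum_fintype, tsum_fintype]
          exact Finset.sum_le_sum fun i _ => htail i
      _ = ENNReal.ofReal ((n:ℝ) * q) + ENNReal.ofReal (Real.sqrt n * δ) := by
          rw [tsum_fintype, Finset.sum_const, Finset.card_fin, nsmul_eq_mul,
            ← ENNReal.ofReal_natCast n, ← ENNReal.ofReal_mul (by positivity)]
      _ = ENNReal.ofReal ((n:ℝ) * q + Real.sqrt n * δ) := by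
          rw [← ENNReal.ofReal_add (by positivity) (by positivity)]
      _ ≤ ENNReal.ofReal (((n:ℝ)^(2:ℕ))⁻¹) := by
          apply ENNReal.ofReal_le_ofReal
          exact numeric_bound n hn
  -- conclude
  have hone : (1:ℝ≥0∞) ≤ μ E + μ Eᶜ := by
    rw [← measure_univ (μ := μ), ← Set.union_compl_self E]
    exact measure_union_le _ _
  have hn2R : (2:ℝ) ≤ (n:ℝ) := by exact_mod_cast hn
  have hb1 : ((n:ℝ)^(2:ℕ))⁻¹ ≤ 1 := by
    rw [inv_le_one_iff₀]
    right
    nlinarith [hn2R]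
  have hrpow2 : (n:ℝ) ^ (-2:ℝ) = ((n:ℝ)^(2:ℕ))⁻¹ := by
    rw [show (-2:ℝ) = -((2:ℕ):ℝ) by norm_num, rpow_neg_nat_eq _ hn0.le]
  rw [hrpow2]
  have hkey : ENNReal.ofReal (1 - ((n:ℝ)^(2:ℕ))⁻¹) + ENNReal.ofReal (((n:ℝ)^(2:ℕ))⁻¹)
      ≤ μ E + ENNReal.ofReal (((n:ℝ)^(2:ℕ))⁻¹) := by
    rw [← ENNReal.ofReal_add (by linarith) (by positivity)]
    rw [show 1 - ((n:ℝ)^(2:ℕ))⁻¹ + ((n:ℝ)^(2:ℕ))⁻¹ = 1 by ring, ENNReal.ofReal_one]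
    exact le_trans hone (add_le_add_right hEc _)
  exact (ENNReal.add_le_add_iff_right ENNReal.ofReal_ne_top).mp hkey
end

section
/- Fix a block size s ≥ 1 and a block count m ≥ 1, and let Δ(s) be the (ms)×(ms) shift-down-by-s matrix. For an (ms)×s matrix X, let T_L(X) be the (ms)×(ms) block lower-triangular Toeplitz matrix whose (i,j) s×s block is X_{\{i−j+1\}} (the (i−j+1)-st s×s block of X) when j ≤ i, and 0 when j > i. Then for any number t and any (ms)×s real matrices X⁽¹⁾,…,X⁽ᵗ⁾ and Y⁽¹⁾,…,Y⁽ᵗ⁾, the matrix M = Σ_{k=1}^{t} T_L(X⁽ᵏ⁾)·T_L(Y⁽ᵏ⁾)ᵀ is the unique (ms)×(ms) matrix satisfying M − Δ(s)·M·Δ(s)ᵀ = Σ_{k=1}^{t} X⁽ᵏ⁾·(Y⁽ᵏ⁾)ᵀ; in particular, for every (ms)×(ms) matrix N there is exactly one matrix M with M − Δ(s)·M·Δ(s)ᵀ = N. -/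
open Matrix

/-- The `n×n` shift-down-by-`s` matrix: `(Δ(s))_{ij} = 1` iff `i = j + s`. -/
def shiftMatrix (n s : ℕ) : Matrix (Fin n) (Fin n) ℝ :=
  Matrix.of fun i j => if (i : ℕ) = (j : ℕ) + s then 1 else 0

/-- The block lower-triangular Toeplitz matrix `T_L(X)` built from an `(ms)×s` matrix `X`
viewed as a vertical stack of `m` blocks of size `s×s`: the `s×s` block of `T_L(X)` in block
position `(i, j)` is the `(i−j+1)`-st block of `X` when `j ≤ i`, and `0` otherwise. -/
def TL {m s : ℕ} (hs : 0 < s) (X : Matrix (Fin (m * s)) (Fin s) ℝ) :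
    Matrix (Fin (m * s)) (Fin (m * s)) ℝ :=
  Matrix.of fun p q =>
    if (q : ℕ) / s ≤ (p : ℕ) / s then
      X ⟨((p : ℕ) / s - (q : ℕ) / s) * s + (p : ℕ) % s, by
          have hp : (p : ℕ) / s < m :=
            Nat.div_lt_of_lt_mul (Nat.mul_comm m s ▸ p.isLt)
          have h1 : (p : ℕ) / s - (q : ℕ) / s < m :=
            lt_of_le_of_lt (Nat.sub_le _ _) hp
          calc ((p : ℕ) / s - (q : ℕ) / s) * s + (p : ℕ) % s
              < ((p : ℕ) / s - (q : ℕ) / s) * s + s :=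
                Nat.add_lt_add_left (Nat.mod_lt _ hs) _
            _ = (((p : ℕ) / s - (q : ℕ) / s) + 1) * s := by ring
            _ ≤ m * s := Nat.mul_le_mul (Nat.succ_le_of_lt h1) le_rfl⟩
        ⟨(q : ℕ) % s, Nat.mod_lt _ hs⟩
    else 0

lemma shift_mul_apply {n s : ℕ} (M : Matrix (Fin n) (Fin n) ℝ) (p q : Fin n) :
    (shiftMatrix n s * M) p q =
      if h : s ≤ (p : ℕ) then
        M ⟨(p : ℕ) - s, lt_of_le_of_lt (Nat.sub_le _ _) p.isLt⟩ q else 0 := by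
  rw [Matrix.mul_apply]
  split_ifs with h
  · rw [Finset.sum_eq_single (⟨(p : ℕ) - s, lt_of_le_of_lt (Nat.sub_le _ _) p.isLt⟩ : Fin n)]
    · simp only [shiftMatrix, Matrix.of_apply]
      rw [if_pos (by first | omega | (simp only [Fin.val_mk]; omega))]; ring
    · intro k _ hk
      simp only [shiftMatrix, Matrix.of_apply]
      rw [if_neg, zero_mul]
      intro hc; apply hk; exact Fin.ext (by first | omega | (simp only [Fin.val_mk]; omega))
    · intro h'; exact absurd (Finset.mem_univ _) h'
  · apply Finset.sum_eq_zero
    intro k _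
    simp only [shiftMatrix, Matrix.of_apply]
    rw [if_neg (by omega), zero_mul]

lemma mul_shiftT_apply {n s : ℕ} (M : Matrix (Fin n) (Fin n) ℝ) (p q : Fin n) :
    (M * (shiftMatrix n s)ᵀ) p q =
      if h : s ≤ (q : ℕ) then
        M p ⟨(q : ℕ) - s, lt_of_le_of_lt (Nat.sub_le _ _) q.isLt⟩ else 0 := by
  rw [Matrix.mul_apply]
  split_ifs with h
  · rw [Finset.sum_eq_single (⟨(q : ℕ) - s, lt_of_le_of_lt (Nat.sub_le _ _) q.isLt⟩ : Fin n)]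
    · simp only [shiftMatrix, transpose_apply, Matrix.of_apply]
      rw [if_pos (by first | omega | (simp only [Fin.val_mk]; omega))]; ring
    · intro k _ hk
      simp only [shiftMatrix, transpose_apply, Matrix.of_apply]
      rw [if_neg, mul_zero]
      intro hc; apply hk; exact Fin.ext (by first | omega | (simp only [Fin.val_mk]; omega))
    · intro h'; exact absurd (Finset.mem_univ _) h'
  · apply Finset.sum_eq_zero
    intro k _
    simp only [shiftMatrix, transpose_apply, Matrix.of_apply]
    rw [if_neg (by omega), mul_zero]

lemma mul_shift_apply {n s : ℕ} (M : Matrix (Fin n) (Fin n) ℝ) (p q : Fin n) :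
    (M * shiftMatrix n s) p q =
      if h : (q : ℕ) + s < n then M p ⟨(q : ℕ) + s, h⟩ else 0 := by
  rw [Matrix.mul_apply]
  split_ifs with h
  · rw [Finset.sum_eq_single (⟨(q : ℕ) + s, h⟩ : Fin n)]
    · simp only [shiftMatrix, Matrix.of_apply]
      rw [if_pos (by simp only [Fin.val_mk])]; ring
    · intro k _ hk
      simp only [shiftMatrix, Matrix.of_apply]
      rw [if_neg, mul_zero]
      intro hc; apply hk; exact Fin.ext (by first | omega | (simp only [Fin.val_mk]; omega))
    · intro h'; exact absurd (Finset.mem_univ _) h'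
  · apply Finset.sum_eq_zero
    intro k _
    simp only [shiftMatrix, Matrix.of_apply]
    rw [if_neg (by omega), mul_zero]

def iotaM (n s : ℕ) : Matrix (Fin n) (Fin s) ℝ :=
  Matrix.of fun p j => if (p : ℕ) = (j : ℕ) then 1 else 0

lemma TL_mul_iota {m s : ℕ} (hm : 1 ≤ m) (hs : 0 < s)
    (X : Matrix (Fin (m * s)) (Fin s) ℝ) :
    TL hs X * iotaM (m * s) s = X := by
  have hsn : s ≤ m * s := Nat.le_mul_of_pos_left s hm
  ext p j
  rw [Matrix.mul_apply]
  rw [Finset.sum_eq_single (⟨(j : ℕ), lt_of_lt_of_le j.isLt hsn⟩ : Fin (m * s))]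
  · simp only [iotaM, Matrix.of_apply, Fin.val_mk, if_pos rfl, mul_one]
    have hj : (j : ℕ) < s := j.isLt
    have hj0 : (j : ℕ) / s = 0 := Nat.div_eq_of_lt hj
    simp only [TL, Matrix.of_apply, Fin.val_mk, hj0, Nat.zero_le, if_pos]
    have e1 : ((p : ℕ) / s - 0) * s + (p : ℕ) % s = (p : ℕ) := by
      rw [Nat.sub_zero]; exact Nat.div_add_mod' _ _
    have e2 : (j : ℕ) % s = (j : ℕ) := Nat.mod_eq_of_lt hj
    rw [show (⟨((p : ℕ) / s - 0) * s + (p : ℕ) % s, _⟩ : Fin (m * s)) = p from Fin.ext (by simp only [Fin.val_mk]; omega),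
      show (⟨(j : ℕ) % s, Nat.mod_lt _ hs⟩ : Fin s) = j from Fin.ext (by simp only [Fin.val_mk]; omega), mul_one]
  · intro k _ hk
    simp only [iotaM, Matrix.of_apply, Fin.val_mk]
    rw [if_neg, mul_zero]
    intro hc; apply hk; exact Fin.ext (by simp only [Fin.val_mk]; omega)
  · intro h'; exact absurd (Finset.mem_univ _) h'

lemma iotaT_mul_iota {n s : ℕ} (hsn : s ≤ n) :
    (iotaM n s)ᵀ * iotaM n s = (1 : Matrix (Fin s) (Fin s) ℝ) := by
  ext j k
  rw [Matrix.mul_apply]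
  rw [Finset.sum_eq_single (⟨(j : ℕ), lt_of_lt_of_le j.isLt hsn⟩ : Fin n)]
  · simp only [iotaM, transpose_apply, Matrix.of_apply, Fin.val_mk, Matrix.one_apply]
    rw [if_true, one_mul]
    by_cases h : (j : ℕ) = (k : ℕ)
    · rw [if_pos h, if_pos (Fin.ext h)]
    · rw [if_neg h, if_neg (fun hc => h (congrArg Fin.val hc))]
  · intro b _ hb
    simp only [iotaM, transpose_apply, Matrix.of_apply, Fin.val_mk]
    rw [if_neg, zero_mul]
    intro hc; apply hb; exact Fin.ext (by simp only [Fin.val_mk]; omega)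
  · intro h'; exact absurd (Finset.mem_univ _) h'

lemma mul_iotaT_apply {n s : ℕ} {r : ℕ} (X : Matrix (Fin r) (Fin s) ℝ) (p : Fin r) (q : Fin n) :
    (X * (iotaM n s)ᵀ) p q = if h : (q : ℕ) < s then X p ⟨(q : ℕ), h⟩ else 0 := by
  rw [Matrix.mul_apply]
  split_ifs with h
  · rw [Finset.sum_eq_single (⟨(q : ℕ), h⟩ : Fin s)]
    · simp only [iotaM, transpose_apply, Matrix.of_apply, Fin.val_mk]
      rw [if_true, mul_one]
    · intro k _ hk
      simp only [iotaM, transpose_apply, Matrix.of_apply]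
      rw [if_neg, mul_zero]
      intro hc; apply hk; exact Fin.ext (by simp only [Fin.val_mk]; omega)
    · intro h'; exact absurd (Finset.mem_univ _) h'
  · apply Finset.sum_eq_zero
    intro k _
    simp only [iotaM, transpose_apply, Matrix.of_apply]
    rw [if_neg (by omega), mul_zero]

lemma sub_div_helper {q s : ℕ} (hs : 0 < s) (h : s ≤ q) : (q - s) / s = q / s - 1 := by
  have h1 : q - s = q - s * 1 := by omega
  rw [h1, Nat.sub_mul_div q s 1]

lemma sub_mod_helper {q s : ℕ} (h : s ≤ q) : (q - s) % s = q % s := by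
  conv_rhs => rw [show q = q - s + s from (Nat.sub_add_cancel h).symm]
  rw [Nat.add_mod_right]

lemma one_le_div_helper {q s : ℕ} (hs : 0 < s) (h : s ≤ q) : 1 ≤ q / s :=
  (Nat.one_le_div_iff hs).mpr h

/-- `Δ · T_L(X) · Δᵀ = T_L(X) − X·ιᵀ`. -/
lemma shift_TL_shiftT {m s : ℕ} (hm : 1 ≤ m) (hs : 0 < s)
    (X : Matrix (Fin (m * s)) (Fin s) ℝ) :
    shiftMatrix (m * s) s * TL hs X * (shiftMatrix (m * s) s)ᵀ =
      TL hs X - X * (iotaM (m * s) s)ᵀ := by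
  ext p q
  rw [Matrix.sub_apply, mul_shiftT_apply, mul_iotaT_apply]
  by_cases hq : s ≤ (q : ℕ)
  · rw [dif_pos hq, shift_mul_apply, dif_neg (show ¬((q : ℕ) < s) by omega)]
    by_cases hp : s ≤ (p : ℕ)
    · rw [dif_pos hp]
      have hq1 : ((q : ℕ) - s) / s = (q : ℕ) / s - 1 := sub_div_helper hs hq
      have hp1 : ((p : ℕ) - s) / s = (p : ℕ) / s - 1 := sub_div_helper hs hp
      have hq2 : ((q : ℕ) - s) % s = (q : ℕ) % s := sub_mod_helper hq
      have hp2 : ((p : ℕ) - s) % s = (p : ℕ) % s := sub_mod_helper hp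
      have hqd : 1 ≤ (q : ℕ) / s := one_le_div_helper hs hq
      have hpd : 1 ≤ (p : ℕ) / s := one_le_div_helper hs hp
      simp only [TL, Matrix.of_apply, Fin.val_mk]
      by_cases hle : (q : ℕ) / s ≤ (p : ℕ) / s
      · rw [if_pos (by omega), if_pos hle]
        rw [show (⟨(((p:ℕ)-s)/s - ((q:ℕ)-s)/s) * s + ((p:ℕ)-s) % s, _⟩ : Fin (m*s)) =
            (⟨((p:ℕ)/s - (q:ℕ)/s) * s + (p:ℕ) % s, _⟩ : Fin (m*s)) from Fin.ext (by
          simp only [Fin.val_mk]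
          rw [hq1, hp1, hp2, show (p:ℕ)/s - 1 - ((q:ℕ)/s - 1) = (p:ℕ)/s - (q:ℕ)/s by omega]),
          show (⟨((q:ℕ)-s) % s, Nat.mod_lt _ hs⟩ : Fin s) = (⟨(q:ℕ) % s, Nat.mod_lt _ hs⟩ : Fin s)
            from Fin.ext (by simp only [Fin.val_mk]; omega), sub_zero]
      · rw [if_neg (by omega), if_neg hle, sub_zero]
    · rw [dif_neg hp]
      simp only [TL, Matrix.of_apply]
      rw [if_neg, sub_zero]
      have : (p : ℕ) / s = 0 := Nat.div_eq_of_lt (by omega)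
      have := one_le_div_helper hs hq
      omega
  · -- q < s : first block column
    rw [dif_neg hq, dif_pos (show (q : ℕ) < s by omega)]
    have hq0 : (q : ℕ) / s = 0 := Nat.div_eq_of_lt (by omega)
    have e1 : (p : ℕ) / s * s + (p : ℕ) % s = (p : ℕ) := Nat.div_add_mod' _ _
    simp only [TL, Matrix.of_apply, Fin.val_mk]
    rw [if_pos (by rw [hq0]; exact Nat.zero_le _)]
    rw [show (⟨((p:ℕ)/s - (q:ℕ)/s) * s + (p:ℕ) % s, _⟩ : Fin (m*s)) = p from Fin.ext (by
        simp only [Fin.val_mk, hq0, Nat.sub_zero]; omega),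
      show (⟨(q:ℕ) % s, Nat.mod_lt _ hs⟩ : Fin s) = (⟨(q:ℕ), by omega⟩ : Fin s) from
        Fin.ext (by simp only [Fin.val_mk]; exact Nat.mod_eq_of_lt (by omega))]
    ring

/-- `(Δ · T_L(X) · Δᵀ) · Δ = Δ · T_L(X)`. -/
lemma shift_TL_absorb {m s : ℕ} (hm : 1 ≤ m) (hs : 0 < s)
    (X : Matrix (Fin (m * s)) (Fin s) ℝ) :
    shiftMatrix (m * s) s * TL hs X * (shiftMatrix (m * s) s)ᵀ * shiftMatrix (m * s) s =
      shiftMatrix (m * s) s * TL hs X := by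
  ext p q
  rw [mul_shift_apply]
  by_cases h : (q : ℕ) + s < m * s
  · rw [dif_pos h, mul_shiftT_apply, dif_pos (show s ≤ (q : ℕ) + s by omega)]
    exact congrArg ((shiftMatrix (m * s) s * TL hs X) p)
      (Fin.ext (show (q : ℕ) + s - s = (q : ℕ) by omega))
  · rw [dif_neg h, shift_mul_apply]
    by_cases hp : s ≤ (p : ℕ)
    · rw [dif_pos hp]
      simp only [TL, Matrix.of_apply, Fin.val_mk]
      rw [if_neg]
      have hms : (m - 1) * s = m * s - s := by
        rw [Nat.sub_mul, one_mul]
      have hq1 : (m : ℕ) - 1 ≤ (q : ℕ) / s := by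
        rw [Nat.le_div_iff_mul_le hs, hms]; omega
      have hp1 : ((p : ℕ) - s) / s < m - 1 := by
        rw [Nat.div_lt_iff_lt_mul hs, hms]
        have := p.isLt; omega
      omega
    · rw [dif_neg hp]

lemma shift_pow_mul_entry {m s : ℕ} (N : Matrix (Fin (m * s)) (Fin (m * s)) ℝ) :
    ∀ (k : ℕ) (p q : Fin (m * s)), (p : ℕ) < k * s →
      (shiftMatrix (m * s) s ^ k * N) p q = 0 := by
  intro k
  induction k with
  | zero => intro p q hp; omega
  | succ k ih =>
    intro p q hp
    rw [pow_succ', mul_assoc, shift_mul_apply]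
    by_cases h : s ≤ (p : ℕ)
    · rw [dif_pos h]
      apply ih
      simp only [Fin.val_mk]
      have : (k + 1) * s = k * s + s := Nat.succ_mul _ _
      omega
    · rw [dif_neg h]

lemma shift_pow_mul {m s : ℕ} (N : Matrix (Fin (m * s)) (Fin (m * s)) ℝ) :
    shiftMatrix (m * s) s ^ m * N = 0 := by
  ext p q
  rw [Matrix.zero_apply]
  exact shift_pow_mul_entry N m p q p.isLt

lemma displacement_eq_zero {m s : ℕ}
    (M : Matrix (Fin (m * s)) (Fin (m * s)) ℝ)
    (h : M = shiftMatrix (m * s) s * M * (shiftMatrix (m * s) s)ᵀ) : M = 0 := by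
  have key : ∀ k : ℕ, M = shiftMatrix (m * s) s ^ k * M * ((shiftMatrix (m * s) s)ᵀ) ^ k := by
    intro k
    induction k with
    | zero => simp
    | succ k ih =>
      calc M = shiftMatrix (m * s) s ^ k * M * ((shiftMatrix (m * s) s)ᵀ) ^ k := ih
        _ = shiftMatrix (m * s) s ^ k *
              (shiftMatrix (m * s) s * M * (shiftMatrix (m * s) s)ᵀ) *
              ((shiftMatrix (m * s) s)ᵀ) ^ k := by rw [← h]
        _ = shiftMatrix (m * s) s ^ (k + 1) * M * ((shiftMatrix (m * s) s)ᵀ) ^ (k + 1) := by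
              rw [pow_succ, pow_succ']; noncomm_ring
  have hm := key m
  rw [hm, shift_pow_mul, zero_mul]

lemma displacement_sum_eq {m s : ℕ} (N : Matrix (Fin (m * s)) (Fin (m * s)) ℝ) :
    (∑ k ∈ Finset.range m, shiftMatrix (m * s) s ^ k * N * ((shiftMatrix (m * s) s)ᵀ) ^ k) -
      shiftMatrix (m * s) s *
        (∑ k ∈ Finset.range m, shiftMatrix (m * s) s ^ k * N * ((shiftMatrix (m * s) s)ᵀ) ^ k) *
        (shiftMatrix (m * s) s)ᵀ = N := by
  set Δ := shiftMatrix (m * s) s with hΔ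
  have h1 : Δ * (∑ k ∈ Finset.range m, Δ ^ k * N * (Δᵀ) ^ k) * Δᵀ =
      ∑ k ∈ Finset.range m, Δ ^ (k + 1) * N * (Δᵀ) ^ (k + 1) := by
    rw [Finset.mul_sum, Finset.sum_mul]
    refine Finset.sum_congr rfl fun k _ => ?_
    rw [pow_succ', pow_succ]
    noncomm_ring
  rw [h1, ← Finset.sum_sub_distrib, Finset.sum_range_sub' (fun k => Δ ^ k * N * (Δᵀ) ^ k)]
  rw [pow_zero, one_mul, pow_zero, mul_one, shift_pow_mul, zero_mul, sub_zero]

lemma displacement_exists_unique {m s : ℕ}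
    (N : Matrix (Fin (m * s)) (Fin (m * s)) ℝ) :
    ∃! M : Matrix (Fin (m * s)) (Fin (m * s)) ℝ,
      M - shiftMatrix (m * s) s * M * (shiftMatrix (m * s) s)ᵀ = N := by
  refine ⟨∑ k ∈ Finset.range m,
      shiftMatrix (m * s) s ^ k * N * ((shiftMatrix (m * s) s)ᵀ) ^ k, displacement_sum_eq N, ?_⟩
  intro M' hM'
  set Δ := shiftMatrix (m * s) s with hΔ
  set S := ∑ k ∈ Finset.range m, Δ ^ k * N * (Δᵀ) ^ k with hS
  have h2 : S - Δ * S * Δᵀ = N := displacement_sum_eq N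
  have h3 : M' - Δ * M' * Δᵀ = S - Δ * S * Δᵀ := hM'.trans h2.symm
  have hD : M' - S = 0 := by
    apply displacement_eq_zero
    show M' - S = Δ * (M' - S) * Δᵀ
    rw [mul_sub, sub_mul]
    exact sub_eq_sub_iff_sub_eq_sub.mp h3
  exact sub_eq_zero.mp hD

lemma key_term {m s : ℕ} (hm : 1 ≤ m) (hs : 0 < s)
    (X Y : Matrix (Fin (m * s)) (Fin s) ℝ) :
    TL hs X * (TL hs Y)ᵀ -
      shiftMatrix (m * s) s * (TL hs X * (TL hs Y)ᵀ) * (shiftMatrix (m * s) s)ᵀ = X * Yᵀ := by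
  set Δ := shiftMatrix (m * s) s with hΔ
  set A := TL hs X with hA'
  set B := TL hs Y with hB'
  set I := iotaM (m * s) s with hI'
  have hA : Δ * A * Δᵀ = A - X * Iᵀ := shift_TL_shiftT hm hs X
  have hB : Δ * B * Δᵀ = B - Y * Iᵀ := shift_TL_shiftT hm hs Y
  have hAI : A * I = X := TL_mul_iota hm hs X
  have hBI : B * I = Y := TL_mul_iota hm hs Y
  have hII : Iᵀ * I = 1 := iotaT_mul_iota (Nat.le_mul_of_pos_left s hm)
  have habs : Δ * A * Δᵀ * Δ = Δ * A := shift_TL_absorb hm hs X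
  have e : Δ * (A * Bᵀ) * Δᵀ = (Δ * A * Δᵀ) * (Δ * B * Δᵀ)ᵀ := by
    calc Δ * (A * Bᵀ) * Δᵀ = (Δ * A) * (Bᵀ * Δᵀ) := by noncomm_ring
      _ = (Δ * A * Δᵀ * Δ) * (Bᵀ * Δᵀ) := by rw [habs]
      _ = (Δ * A * Δᵀ) * (Δ * (Bᵀ * Δᵀ)) := by noncomm_ring
      _ = (Δ * A * Δᵀ) * (Δ * B * Δᵀ)ᵀ := by
          rw [transpose_mul, transpose_mul, transpose_transpose, mul_assoc]
  rw [e, hA, hB]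
  have expand : (A - X * Iᵀ) * (B - Y * Iᵀ)ᵀ = A * Bᵀ - X * Yᵀ := by
    rw [transpose_sub, transpose_mul, transpose_transpose, mul_sub, sub_mul, sub_mul]
    have e1 : A * (I * Yᵀ) = X * Yᵀ := by rw [← Matrix.mul_assoc, hAI]
    have e2 : X * Iᵀ * Bᵀ = X * Yᵀ := by rw [Matrix.mul_assoc, ← transpose_mul, hBI]
    have e3 : X * Iᵀ * (I * Yᵀ) = X * Yᵀ := by
      rw [Matrix.mul_assoc, ← Matrix.mul_assoc Iᵀ, hII, Matrix.one_mul]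
    rw [e1, e2, e3]; abel
  rw [expand]; abel

/-- **Block triangular Toeplitz factorizations realize displacement representations.**
For block size `s ≥ 1` and block count `m ≥ 1`, and any `(ms)×s` matrices
`X⁽¹⁾,…,X⁽ᵗ⁾, Y⁽¹⁾,…,Y⁽ᵗ⁾`, the matrix `M = Σₖ T_L(X⁽ᵏ⁾)·T_L(Y⁽ᵏ⁾)ᵀ` is the unique
matrix with `M − Δ(s)·M·Δ(s)ᵀ = Σₖ X⁽ᵏ⁾·(Y⁽ᵏ⁾)ᵀ`; in particular, for every `N` there is
exactly one `M` with `M − Δ(s)·M·Δ(s)ᵀ = N`. -/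
theorem block_toeplitz_displacement_representation {m s t : ℕ}
    (hm : 1 ≤ m) (hs : 0 < s)
    (X Y : Fin t → Matrix (Fin (m * s)) (Fin s) ℝ) :
    ((∑ k, TL hs (X k) * (TL hs (Y k))ᵀ) -
        shiftMatrix (m * s) s * (∑ k, TL hs (X k) * (TL hs (Y k))ᵀ) *
          (shiftMatrix (m * s) s)ᵀ =
      ∑ k, X k * (Y k)ᵀ) ∧
    ∀ N : Matrix (Fin (m * s)) (Fin (m * s)) ℝ,
      ∃! M : Matrix (Fin (m * s)) (Fin (m * s)) ℝ,
        M - shiftMatrix (m * s) s * M * (shiftMatrix (m * s) s)ᵀ = N := by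
  constructor
  · rw [Finset.mul_sum, Finset.sum_mul, ← Finset.sum_sub_distrib]
    exact Finset.sum_congr rfl fun k _ => key_term hm hs (X k) (Y k)
  · exact fun N => displacement_exists_unique N
end
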